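/- For a > 0 define x1(a) = ηa(δ + v_s + b), x2(a) = λ_o(δ + b)(λ + b) + λ_o v_s(δq + b) + ηω_o(δ + v_s + b) − ηa(b + δ − v_i), x3(a) = λ_o δ p v_i + ηω_o(b + δ − v_i), h_a(a) = (−x2(a) + √(x2(a)² + 4x1(a)x3(a)))/(2x1(a)), and h_n(a) = λ_o[b − v_i + δq(1 − h_a(a)) + λh_a(a)]/[η(ω_o + a·h_a(a)) + λ_o(δq + b)]. Then, as a → ∞, h_a(a) tends to (b + δ − v_i)/(δ + v_s + b) and h_n(a) tends to 0. -/

import Mathlib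

open Filter

/-- As the local awareness rate `a = α → ∞`, the fractions at the disease-free
steady state of model (2) satisfy `h_a(a) → (b + δ - v_i)/(δ + v_s + b)` and
`h_n(a) → 0`. -/
theorem ha_hn_limits_in_local_awareness
    (b eta lam lamo omegao delta vs p q vi : ℝ)
    (hb : 0 < b) (heta : 0 < eta) (hlam : 0 < lam) (hlamo : 0 < lamo)
    (homegao : 0 < omegao) (hdelta : 0 < delta) (hvs : 0 < vs)
    (hp0 : 0 ≤ p) (hp1 : p ≤ 1) (hq : q = 1 - p)
    (hvi0 : 0 < vi) (hvib : vi < b)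
    (ha hn : ℝ → ℝ)
    (hha : ∀ a : ℝ, ha a =
      (-(lamo * (delta + b) * (lam + b) + lamo * vs * (delta * q + b)
          + eta * omegao * (delta + vs + b) - eta * a * (b + delta - vi))
        + Real.sqrt ((lamo * (delta + b) * (lam + b) + lamo * vs * (delta * q + b)
            + eta * omegao * (delta + vs + b) - eta * a * (b + delta - vi)) ^ 2
          + 4 * (eta * a * (delta + vs + b))
            * (lamo * delta * p * vi + eta * omegao * (b + delta - vi))))
        / (2 * (eta * a * (delta + vs + b))))
    (hhn : ∀ a : ℝ, hn a =
      lamo * (b - vi + delta * q * (1 - ha a) + lam * ha a)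
        / (eta * (omegao + a * ha a) + lamo * (delta * q + b))) :
    Tendsto ha atTop (nhds ((b + delta - vi) / (delta + vs + b))) ∧
    Tendsto hn atTop (nhds 0) := by
  have hS : (0:ℝ) < delta + vs + b := by linarith
  have hK : (0:ℝ) < b + delta - vi := by linarith
  set C : ℝ := lamo * (delta + b) * (lam + b) + lamo * vs * (delta * q + b)
      + eta * omegao * (delta + vs + b) with hCdef
  set S : ℝ := delta + vs + b with hSdef
  set K : ℝ := b + delta - vi with hKdef
  set D : ℝ := lamo * delta * p * vi + eta * omegao * (b + delta - vi) with hDdef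
  set f : ℝ → ℝ := fun t =>
    (-(C * t - eta * K) + Real.sqrt ((C * t - eta * K) ^ 2 + 4 * (eta * S * D) * t))
      / (2 * (eta * S)) with hfdef
  have hf0 : f 0 = K / S := by
    have h1 : ((C * 0 - eta * K) ^ 2 + 4 * (eta * S * D) * 0) = (eta * K) ^ 2 := by ring
    simp only [hfdef, h1, Real.sqrt_sq (by positivity : (0:ℝ) ≤ eta * K)]
    field_simp
    ring
  have hfc : ContinuousAt f 0 := by
    apply ContinuousAt.div _ continuousAt_const (by positivity)
    apply ContinuousAt.add
    · fun_prop
    · exact (Real.continuous_sqrt.continuousAt).comp (by fun_prop)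
  have heq : ∀ a : ℝ, 0 < a → ha a = f a⁻¹ := by
    intro a hapos
    have hane : a ≠ 0 := ne_of_gt hapos
    have hsq : Real.sqrt ((C - eta * a * K) ^ 2 + 4 * (eta * a * S) * D)
        = a * Real.sqrt ((C * a⁻¹ - eta * K) ^ 2 + 4 * (eta * S * D) * a⁻¹) := by
      have harg : (C - eta * a * K) ^ 2 + 4 * (eta * a * S) * D
          = a ^ 2 * ((C * a⁻¹ - eta * K) ^ 2 + 4 * (eta * S * D) * a⁻¹) := by
        field_simp
      rw [harg, Real.sqrt_mul (sq_nonneg a), Real.sqrt_sq hapos.le]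
    rw [hha a, hfdef]
    simp only []
    rw [hsq]
    rw [div_eq_div_iff (by positivity) (by positivity)]
    field_simp
  have htf : Tendsto (fun a : ℝ => f a⁻¹) atTop (nhds (K / S)) := by
    have := hfc.tendsto.comp tendsto_inv_atTop_zero
    rwa [hf0] at this
  have hhaT : Tendsto ha atTop (nhds (K / S)) := by
    apply htf.congr'
    filter_upwards [eventually_gt_atTop (0:ℝ)] with a hav
    exact (heq a hav).symm
  refine ⟨hhaT, ?_⟩
  -- hn → 0
  have hKS : 0 < K / S := div_pos hK hS
  have hmul : Tendsto (fun a : ℝ => a * ha a) atTop atTop :=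
    Filter.Tendsto.atTop_mul_pos hKS tendsto_id hhaT
  have hden : Tendsto (fun a : ℝ => eta * (omegao + a * ha a) + lamo * (delta * q + b))
      atTop atTop := by
    apply tendsto_atTop_add_const_right
    apply Tendsto.const_mul_atTop heta
    exact tendsto_atTop_add_const_left _ _ hmul
  have hnum : Tendsto (fun a : ℝ => lamo * (b - vi + delta * q * (1 - ha a) + lam * ha a))
      atTop (nhds (lamo * (b - vi + delta * q * (1 - K / S) + lam * (K / S)))) := by
    apply Tendsto.const_mul
    apply Tendsto.add
    · apply Tendsto.add tendsto_const_nhds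
      exact Tendsto.const_mul _ (Tendsto.const_sub _ hhaT)
    · exact Tendsto.const_mul _ hhaT
  have := Tendsto.div_atTop hnum hden
  apply this.congr
  intro a
  exact (hhn a).symm
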